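/- Let f_SP and f_SC denote, for a two-terminal graph with rational edge weights, the weighted generating functions of source-to-sink simple paths and of simple cycles respectively (weight of a path/cycle is the product of its edge weights). Then under parallel composition of two edge-disjoint two-terminal graphs G₁ ∥ G₂ sharing only the two terminals: f_SC(G₁ ∥ G₂) = f_SC(G₁) + f_SC(G₂) + f_SP(G₁)·f_SP(G₂). This follows from the bijection SC(G₁ ∥ G₂) = SC(G₁) ⊔ SC(G₂) ⊔ { concatenation of γ₁ ∈ SP(G₁) with the reverse of γ₂ ∈ SP(G₂) }, which is to be proven: every simple cycle of G₁ ∥ G₂ either lies entirely in G₁, or entirely in G₂, or decomposes uniquely as a source-to-sink simple path in G₁ followed by a reversed source-to-sink simple path in G₂. -/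

import Mathlib

open scoped Classical
open Finset

/-- Weighted generating function of the simple cycles of `H`: the sum, over edge
sets of cycles of `H`, of the product of the edge weights. -/
noncomputable def cycleGF {V : Type*} [Fintype V] [DecidableEq V]
    (H : SimpleGraph V) (w : Sym2 V → ℚ) : ℚ :=
  ∑ C ∈ (univ : Finset (Finset (Sym2 V))).filter
      (fun C => ∃ (v : V) (c : H.Walk v v), c.IsCycle ∧ c.edges.toFinset = C),
    ∏ e ∈ C, w e

/-- Weighted generating function of the simple paths of `H` from `σ` to `τ`. -/
noncomputable def pathGF {V : Type*} [Fintype V] [DecidableEq V]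
    (H : SimpleGraph V) (σ τ : V) (w : Sym2 V → ℚ) : ℚ :=
  ∑ C ∈ (univ : Finset (Finset (Sym2 V))).filter
      (fun C => ∃ p : H.Walk σ τ, p.IsPath ∧ p.edges.toFinset = C),
    ∏ e ∈ C, w e

section Helpers
open SimpleGraph
variable {V : Type*}


namespace SimpleGraph
variable {V : Type*}

namespace Walk

lemma end_mem_support_tail' {G : SimpleGraph V} {u v : V} (p : G.Walk u v) (h : ¬ p.Nil) :
    v ∈ p.support.tail := by
  cases p with
  | nil => simp at h
  | cons hadj q => simpa using q.end_mem_support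

lemma mem_graph_support_of_mem_support {G : SimpleGraph V} {u v : V} (p : G.Walk u v)
    (h : ¬ p.Nil) : ∀ x ∈ p.support, x ∈ G.support := by
  induction p with
  | nil => simp at h
  | @cons a b c hadj q ih =>
    intro x hx
    rw [support_cons] at hx
    rcases List.mem_cons.mp hx with rfl | hx
    · exact ⟨_, hadj⟩
    · by_cases hq : q.Nil
      · rw [nil_iff_support_eq.mp hq] at hx
        simp only [List.mem_singleton] at hx
        subst hx
        exact ⟨_, hadj.symm⟩
      · exact ih hq x hx

lemma eq_of_isPath_of_edges_eq {G : SimpleGraph V} :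
    ∀ {a b : V} (p : G.Walk a b), p.IsPath → ∀ (q : G.Walk a b), q.IsPath →
      (∀ e, e ∈ p.edges ↔ e ∈ q.edges) → p = q := by
  intro a b p
  induction p with
  | nil =>
    intro _ q hq h
    have hq0 : q.edges = [] := by
      rcases hq' : q.edges with _ | ⟨e, es⟩
      · rfl
      · exact absurd ((h e).mpr (by simp [hq'])) (by simp)
    have : q.length = 0 := by
      rw [← SimpleGraph.Walk.length_edges, hq0]; rfl
    exact (SimpleGraph.Walk.nil_iff_eq_nil.mp (SimpleGraph.Walk.length_eq_zero_iff.mp this)).symm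
  | @cons a c b hadj p' ih =>
    intro hp q hq h
    cases q with
    | nil => exact absurd ((h s(a, c)).mp (by simp)) (by simp)
    | @cons _ d _ hadj' q' =>
      have hd : s(a, d) ∈ (Walk.cons hadj p').edges := (h _).mpr (by simp)
      rw [edges_cons, List.mem_cons] at hd
      have hanotp' : a ∉ p'.support := (Walk.cons_isPath_iff hadj p').mp hp |>.2
      have hanotq' : a ∉ q'.support := (Walk.cons_isPath_iff hadj' q').mp hq |>.2
      rcases hd with hd | hd
      · have : d = c := by
          rcases Sym2.eq_iff.mp hd with ⟨-, h2⟩ | ⟨h1, h2⟩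
          · exact h2
          · exact h2.trans h1
        subst this
        have hedges : ∀ e, e ∈ p'.edges ↔ e ∈ q'.edges := by
          intro e
          constructor
          · intro he
            have := (h e).mp (by simp [he])
            rw [edges_cons, List.mem_cons] at this
            rcases this with rfl | h2
            · exact absurd (p'.fst_mem_support_of_mem_edges he) hanotp'
            · exact h2
          · intro he
            have := (h e).mpr (by simp [he])
            rw [edges_cons, List.mem_cons] at this
            rcases this with rfl | h2
            · exact absurd (q'.fst_mem_support_of_mem_edges he) hanotq'
            · exact h2
        rw [ih ((Walk.cons_isPath_iff hadj p').mp hp).1 q'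
          ((Walk.cons_isPath_iff hadj' q').mp hq).1 hedges]
      · exact absurd (p'.fst_mem_support_of_mem_edges hd) hanotp'

end Walk
end SimpleGraph

lemma chain_transition {α : Type*} {R : α → α → Prop} {P : α → Prop} :
    ∀ {l : List α}, l.Chain' R → (∃ a ∈ l, P a) → (∃ b ∈ l, ¬ P b) →
    ∃ x ∈ l, ∃ y ∈ l, R x y ∧ ¬ (P x ↔ P y) := by
  intro l
  induction l with
  | nil => rintro _ ⟨a, ha, _⟩; simp at ha
  | cons c l ih =>
    rintro hchain ⟨a, ha, hPa⟩ ⟨b, hb, hPb⟩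
    by_cases hc : P c
    · have hbl : b ∈ l := by
        rcases List.mem_cons.mp hb with rfl | h; · exact absurd hc hPb
        · exact h
      by_cases hPl : ∃ a' ∈ l, P a'
      · obtain ⟨x, hx, y, hy, hr⟩ := ih hchain.tail hPl ⟨b, hbl, hPb⟩
        exact ⟨x, List.mem_cons_of_mem _ hx, y, List.mem_cons_of_mem _ hy, hr⟩
      · cases l with
        | nil => simp at hbl
        | cons y l' =>
          refine ⟨c, by simp, y, by simp, (List.isChain_cons_cons.mp hchain).1, ?_⟩
          have : ¬ P y := fun h => hPl ⟨y, by simp, h⟩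
          tauto
    · have hal : a ∈ l := by
        rcases List.mem_cons.mp ha with rfl | h; · exact absurd hPa hc
        · exact h
      by_cases hPl : ∃ b' ∈ l, ¬ P b'
      · obtain ⟨x, hx, y, hy, hr⟩ := ih hchain.tail ⟨a, hal, hPa⟩ hPl
        exact ⟨x, List.mem_cons_of_mem _ hx, y, List.mem_cons_of_mem _ hy, hr⟩
      · cases l with
        | nil => simp at hal
        | cons y l' =>
          refine ⟨c, by simp, y, by simp, (List.isChain_cons_cons.mp hchain).1, ?_⟩
          have : P y := by_contra fun h => hPl ⟨y, by simp, h⟩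
          tauto

open SimpleGraph

variable {V : Type*}

lemma Walk.end_tail' {G : SimpleGraph V} {u v : V} (p : G.Walk u v) (h : ¬ p.Nil) :
    v ∈ p.support.tail := by
  cases p with
  | nil => simp at h
  | cons hadj q => simpa using q.end_mem_support

lemma Walk.not_nil_of_edges_ne_nil {G : SimpleGraph V} {u v : V} {p : G.Walk u v}
    (h : p.edges ≠ []) : ¬ p.Nil := by
  intro hn
  rw [SimpleGraph.Walk.nil_iff_length_eq] at hn
  exact h (List.length_eq_zero_iff.mp (by rw [SimpleGraph.Walk.length_edges, hn]))

lemma Walk.edges_eq_nil_of_nil {G : SimpleGraph V} {u v : V} {p : G.Walk u v}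
    (h : p.Nil) : p.edges = [] := by
  rw [SimpleGraph.Walk.nil_iff_length_eq] at h
  exact List.length_eq_zero_iff.mp (by rw [SimpleGraph.Walk.length_edges, h])

lemma Walk.exists_edge_start {G : SimpleGraph V} {u v : V} (p : G.Walk u v) (h : ¬ p.Nil) :
    ∃ y, s(u, y) ∈ p.edges := by
  cases p with
  | nil => simp at h
  | @cons _ y _ hadj q => exact ⟨y, by simp⟩

lemma Walk.exists_edge_end {G : SimpleGraph V} {u v : V} (p : G.Walk u v) (h : ¬ p.Nil) :
    ∃ y, s(v, y) ∈ p.edges := by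
  have hrev : ¬ p.reverse.Nil := by
    rw [SimpleGraph.Walk.nil_iff_length_eq, SimpleGraph.Walk.length_reverse]
    exact SimpleGraph.Walk.nil_iff_length_eq.not.mp h
  obtain ⟨y, hy⟩ := Walk.exists_edge_start p.reverse hrev
  exact ⟨y, by rwa [SimpleGraph.Walk.edges_reverse, List.mem_reverse] at hy⟩

lemma split_lemma' {H H₁ H₂ : SimpleGraph V} (hH : ∀ e ∈ H.edgeSet, e ∈ H₁.edgeSet ∨ e ∈ H₂.edgeSet) :
    ∀ {a b : V} (p : H.Walk a b),
    (∀ e ∈ p.edges, e ∈ H₁.edgeSet) ∨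
    ∃ (x y : V) (q : H.Walk a x) (hxy : H.Adj x y) (r : H.Walk y b),
      p = q.append (Walk.cons hxy r) ∧ (∀ e ∈ q.edges, e ∈ H₁.edgeSet) ∧ s(x, y) ∈ H₂.edgeSet := by
  intro a b p
  induction p with
  | nil => exact Or.inl (by simp)
  | @cons a c b hadj p' ih =>
    by_cases h1 : s(a, c) ∈ H₁.edgeSet
    · rcases ih with hall | ⟨x, y, q, hxy, r, hdecomp, hq, hxy2⟩
      · left
        intro e he
        rw [Walk.edges_cons, List.mem_cons] at he
        rcases he with rfl | he
        · exact h1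
        · exact hall e he
      · right
        exact ⟨x, y, Walk.cons hadj q, hxy, r, by rw [hdecomp]; rfl, by
          intro e he
          rw [Walk.edges_cons, List.mem_cons] at he
          rcases he with rfl | he
          · exact h1
          · exact hq e he, hxy2⟩
    · right
      have h2 : s(a, c) ∈ H₂.edgeSet := (hH _ hadj).resolve_left h1
      exact ⟨a, c, Walk.nil, hadj, p', rfl, by simp, h2⟩

lemma cycle_split {H H₁ H₂ : SimpleGraph V} {σ τ : V}
    (hH : ∀ e ∈ H.edgeSet, e ∈ H₁.edgeSet ∨ e ∈ H₂.edgeSet)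
    (hedge : Disjoint H₁.edgeSet H₂.edgeSet)
    (hvert : H₁.support ∩ H₂.support ⊆ {σ, τ})
    {z w : V} (hz : z ∈ ({σ, τ} : Set V))
    (hadj : H.Adj z w) (d₀ : H.Walk w z)
    (hd : (Walk.cons hadj d₀).IsCycle)
    (hw1 : s(z, w) ∈ H₁.edgeSet)
    (h2 : ∃ e ∈ (Walk.cons hadj d₀).edges, e ∈ H₂.edgeSet) :
    ∃ (x : V) (p : H.Walk z x) (q : H.Walk x z),
      x ∈ ({σ, τ} : Set V) ∧ x ≠ z ∧ p.IsPath ∧ q.IsPath ∧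
      (∀ e ∈ p.edges, e ∈ H₁.edgeSet) ∧ (∀ e ∈ q.edges, e ∈ H₂.edgeSet) ∧
      Walk.cons hadj d₀ = p.append q := by
  set d := Walk.cons hadj d₀ with hddef
  obtain ⟨e₂, he₂, he₂2⟩ := h2
  rcases split_lemma' hH d with hall | ⟨x, y, q, hxy, r, hdecomp, hq, hxy2⟩
  · exact absurd (hall e₂ he₂) (fun h => Set.disjoint_left.mp hedge h he₂2)
  · set s' := Walk.cons hxy r with hs'def
    have hedges : d.edges = q.edges ++ (s(x, y) :: r.edges) := by
      rw [hdecomp, Walk.edges_append, Walk.edges_cons]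
    -- q is not nil
    have hqne : q.edges ≠ [] := by
      intro h0
      rw [h0, List.nil_append] at hedges
      have : s(z, w) = s(x, y) := by
        have : d.edges = s(z, w) :: d₀.edges := by rw [hddef, Walk.edges_cons]
        rw [this] at hedges
        exact (List.cons.injEq _ _ _ _ ▸ hedges).1
      exact Set.disjoint_left.mp hedge (this ▸ hw1) hxy2
    have hqnil : ¬ q.Nil := Walk.not_nil_of_edges_ne_nil hqne
    -- support facts
    have hnodup : d.support.tail.Nodup := hd.2
    have htail : d.support.tail = q.support.tail ++ s'.support.tail := by
      rw [hdecomp, Walk.tail_support_append]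
    rw [htail] at hnodup
    have hdisj : q.support.tail.Disjoint s'.support.tail :=
      List.disjoint_of_nodup_append hnodup
    have hx_tail : x ∈ q.support.tail := Walk.end_tail' q hqnil
    have hz_s' : z ∈ s'.support.tail := by
      rw [hs'def, Walk.support_cons]
      simpa using r.end_mem_support
    have hxz : x ≠ z := fun h => hdisj hx_tail (h ▸ hz_s')
    -- x is in both supports
    obtain ⟨y', hy'⟩ := Walk.exists_edge_end q hqnil
    have hx1 : x ∈ H₁.support := ⟨y', (mem_edgeSet _).mp (hq _ hy')⟩
    have hx2 : x ∈ H₂.support := ⟨y, (mem_edgeSet _).mp hxy2⟩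
    have hxστ : x ∈ ({σ, τ} : Set V) := hvert ⟨hx1, hx2⟩
    -- q is a path
    have hqtail_nodup : q.support.tail.Nodup :=
      (List.sublist_append_left _ _).nodup hnodup
    have hz_not_q : z ∉ q.support.tail := fun h => hdisj h hz_s'
    have hqpath : q.IsPath := by
      rw [Walk.isPath_def, Walk.support_eq_cons, List.nodup_cons]
      exact ⟨hz_not_q, hqtail_nodup⟩
    -- s' is a path
    have hs'tail_nodup : s'.support.tail.Nodup :=
      (List.sublist_append_right _ _).nodup hnodup
    have hx_not_s' : x ∉ s'.support.tail := fun h => hdisj hx_tail h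
    have hs'path : s'.IsPath := by
      rw [Walk.isPath_def, Walk.support_eq_cons, List.nodup_cons]
      exact ⟨hx_not_s', hs'tail_nodup⟩
    -- all edges of s' are in H₂
    have hs'all : ∀ e ∈ s'.edges, e ∈ H₂.edgeSet := by
      rcases split_lemma' (H₁ := H₂) (H₂ := H₁) (fun e he => (hH e he).symm) s' with
        hall | ⟨x₂, y₂, q₂, hxy₂, r₂, hdec₂, hq₂, hin₁⟩
      · exact hall
      · exfalso
        have hedges₂ : s'.edges = q₂.edges ++ (s(x₂, y₂) :: r₂.edges) := by
          rw [hdec₂, Walk.edges_append, Walk.edges_cons]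
        have hq₂ne : q₂.edges ≠ [] := by
          intro h0
          rw [h0, List.nil_append] at hedges₂
          have : s(x, y) = s(x₂, y₂) := by
            have : s'.edges = s(x, y) :: r.edges := by rw [hs'def, Walk.edges_cons]
            rw [this] at hedges₂
            exact (List.cons.injEq _ _ _ _ ▸ hedges₂).1
          exact Set.disjoint_left.mp hedge (this ▸ hin₁) hxy2
        have hq₂nil : ¬ q₂.Nil := Walk.not_nil_of_edges_ne_nil hq₂ne
        obtain ⟨y₃, hy₃⟩ := Walk.exists_edge_end q₂ hq₂nil
        have hx₂1 : x₂ ∈ H₁.support := ⟨y₂, (mem_edgeSet _).mp hin₁⟩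
        have hx₂2 : x₂ ∈ H₂.support := ⟨y₃, (mem_edgeSet _).mp (hq₂ _ hy₃)⟩
        have hx₂στ : x₂ ∈ ({σ, τ} : Set V) := hvert ⟨hx₂1, hx₂2⟩
        -- x₂ = x or x₂ = z
        have hx₂cases : x₂ = x ∨ x₂ = z := by
          simp only [Set.mem_insert_iff, Set.mem_singleton_iff] at hx₂στ hxστ hz
          rcases hxστ with rfl | rfl <;> rcases hx₂στ with rfl | rfl <;> tauto
        have hs'nodup : s'.support.Nodup := (Walk.isPath_def _).mp hs'path
        have hsupp₂ : s'.support = q₂.support ++ (Walk.cons hxy₂ r₂).support.tail := by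
          rw [hdec₂, Walk.support_append]
        have hx₂_tail : x₂ ∈ q₂.support.tail := Walk.end_tail' q₂ hq₂nil
        rcases hx₂cases with rfl | rfl
        · -- x₂ = x : start of s' and of q₂
          have : q₂.support.Nodup := by
            rw [hsupp₂] at hs'nodup
            exact (List.sublist_append_left _ _).nodup hs'nodup
          rw [Walk.support_eq_cons, List.nodup_cons] at this
          exact this.1 hx₂_tail
        · -- x₂ = z : end of s'
          rw [hsupp₂] at hs'nodup
          have hdisj₂ := List.disjoint_of_nodup_append hs'nodup
          have hz_in_q₂ : x₂ ∈ q₂.support := q₂.end_mem_support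
          have hz_in_r₂ : x₂ ∈ (Walk.cons hxy₂ r₂).support.tail := by
            rw [Walk.support_cons]
            simpa using r₂.end_mem_support
          exact hdisj₂ hz_in_q₂ hz_in_r₂
    exact ⟨x, q, s', hxστ, hxz, hqpath, hs'path, hq, hs'all, hdecomp⟩

lemma mixed_cycle_decomp {G₁ G₂ : SimpleGraph V} {σ τ : V}
    (hvert : G₁.support ∩ G₂.support ⊆ {σ, τ})
    (hedge : Disjoint G₁.edgeSet G₂.edgeSet)
    {v : V} (c : (G₁ ⊔ G₂).Walk v v) (hc : c.IsCycle)
    (h1 : ∃ e ∈ c.edges, e ∈ G₁.edgeSet) (h2 : ∃ e ∈ c.edges, e ∈ G₂.edgeSet) :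
    ∃ (p : G₁.Walk σ τ) (q : G₂.Walk σ τ), p.IsPath ∧ q.IsPath ∧
      ∀ e, (e ∈ c.edges ↔ e ∈ p.edges ∨ e ∈ q.edges) := by
  classical
  have hH : ∀ e ∈ (G₁ ⊔ G₂).edgeSet, e ∈ G₁.edgeSet ∨ e ∈ G₂.edgeSet := by
    intro e he; rwa [edgeSet_sup] at he
  have hH' : ∀ e ∈ (G₁ ⊔ G₂).edgeSet, e ∈ G₂.edgeSet ∨ e ∈ G₁.edgeSet :=
    fun e he => (hH e he).symm
  have hvert' : G₂.support ∩ G₁.support ⊆ {σ, τ} := by rwa [Set.inter_comm]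
  -- find a transition vertex z ∈ {σ, τ} on the cycle
  obtain ⟨e₁, he₁, he₁'⟩ := h1
  obtain ⟨e₂, he₂, he₂'⟩ := h2
  obtain ⟨d₁, hd₁, hd₁e⟩ := List.mem_map.mp (show e₁ ∈ c.darts.map SimpleGraph.Dart.edge from he₁)
  obtain ⟨d₂, hd₂, hd₂e⟩ := List.mem_map.mp (show e₂ ∈ c.darts.map SimpleGraph.Dart.edge from he₂)
  obtain ⟨dx, hdx, dy, hdy, hR, hPxy⟩ :=
    chain_transition (P := fun d : (G₁ ⊔ G₂).Dart => d.edge ∈ G₁.edgeSet)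
      c.isChain_dartAdj_darts
      ⟨d₁, hd₁, show d₁.edge ∈ G₁.edgeSet by rw [hd₁e]; exact he₁'⟩
      ⟨d₂, hd₂, show ¬ d₂.edge ∈ G₁.edgeSet from
        fun h => Set.disjoint_left.mp hedge h (by rw [hd₂e]; exact he₂')⟩
  have hzmem : dx.snd ∈ ({σ, τ} : Set V) := by
    have hxe : dx.edge = s(dx.fst, dx.snd) := rfl
    have hye : dy.edge = s(dy.fst, dy.snd) := rfl
    have hadjx := dx.adj
    have hadjy := dy.adj
    by_cases hPx : dx.edge ∈ G₁.edgeSet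
    · have hPy : dy.edge ∈ G₂.edgeSet := by
        have : ¬ dy.edge ∈ G₁.edgeSet := fun h => hPxy ⟨fun _ => h, fun _ => hPx⟩
        exact (hH _ dy.edge_mem).resolve_left this
      refine hvert ⟨⟨dx.fst, ?_⟩, ⟨dy.snd, ?_⟩⟩
      · exact ((mem_edgeSet _).mp (hxe ▸ hPx)).symm
      · rw [show dx.snd = dy.fst from hR]; exact (mem_edgeSet _).mp (hye ▸ hPy)
    · have hPy : dy.edge ∈ G₁.edgeSet := by
        by_contra h
        exact hPx (hPxy ⟨fun h' => absurd h' hPx, fun h' => absurd h' h⟩ : False).elim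
      have hPx2 : dx.edge ∈ G₂.edgeSet := (hH _ dx.edge_mem).resolve_left hPx
      refine hvert ⟨⟨dy.snd, ?_⟩, ⟨dx.fst, ?_⟩⟩
      · rw [show dx.snd = dy.fst from hR]; exact (mem_edgeSet _).mp (hye ▸ hPy)
      · exact ((mem_edgeSet _).mp (hxe ▸ hPx2)).symm
  -- continue
  have hzsup : dx.snd ∈ c.support := c.dart_snd_mem_support_of_mem_darts hdx
  obtain ⟨z, hz'⟩ : ∃ z, dx.snd = z := ⟨_, rfl⟩
  rw [hz'] at hzmem hzsup
  have hdcyc : (c.rotate z hzsup).IsCycle := hc.rotate hzsup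
  have hmem : ∀ e, e ∈ (c.rotate z hzsup).edges ↔ e ∈ c.edges :=
    fun e => (c.rotate_edges z hzsup).perm.mem_iff
  have hdnotnil : ¬ (c.rotate z hzsup).Nil := by
    intro h
    exact ((Walk.isCycle_def _).mp hdcyc).2.1 (Walk.nil_iff_eq_nil.mp h)
  obtain ⟨w', hadj, d₀, hdeq⟩ := (Walk.not_nil_iff).mp hdnotnil
  rw [hdeq] at hdcyc hmem
  have hfirstsum : s(z, w') ∈ (G₁ ⊔ G₂).edgeSet := hadj
  simp only [Set.mem_insert_iff, Set.mem_singleton_iff] at hzmem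
  rcases hH _ hfirstsum with hf1 | hf2
  · obtain ⟨x, p, q, hxστ, hxz, hp, hq, hpe, hqe, hdec⟩ :=
      cycle_split hH hedge hvert (by simpa using hzmem) hadj d₀ hdcyc hf1
        ⟨e₂, (hmem e₂).mpr he₂, he₂'⟩
    have hcedges : ∀ e, e ∈ c.edges ↔ (e ∈ p.edges ∨ e ∈ q.edges) := by
      intro e
      rw [← hmem e, hdec, Walk.edges_append, List.mem_append]
    simp only [Set.mem_insert_iff, Set.mem_singleton_iff] at hxστ
    rcases hzmem with rfl | rfl
    · have hxτ : x = τ := by tauto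
      subst hxτ
      refine ⟨p.transfer G₁ hpe, (q.transfer G₂ hqe).reverse, hp.transfer _,
        (hq.transfer _).reverse, ?_⟩
      intro e
      rw [hcedges e, Walk.edges_reverse, List.mem_reverse,
        Walk.edges_transfer, Walk.edges_transfer]
    · have hxσ : x = σ := by tauto
      subst hxσ
      refine ⟨(p.transfer G₁ hpe).reverse, q.transfer G₂ hqe, (hp.transfer _).reverse,
        hq.transfer _, ?_⟩
      intro e
      rw [hcedges e, Walk.edges_reverse, List.mem_reverse,
        Walk.edges_transfer, Walk.edges_transfer]
  · obtain ⟨x, p, q, hxστ, hxz, hp, hq, hpe, hqe, hdec⟩ :=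
      cycle_split hH' hedge.symm hvert' (by simpa using hzmem) hadj d₀ hdcyc hf2
        ⟨e₁, (hmem e₁).mpr he₁, he₁'⟩
    have hcedges : ∀ e, e ∈ c.edges ↔ (e ∈ p.edges ∨ e ∈ q.edges) := by
      intro e
      rw [← hmem e, hdec, Walk.edges_append, List.mem_append]
    simp only [Set.mem_insert_iff, Set.mem_singleton_iff] at hxστ
    rcases hzmem with rfl | rfl
    · have hxτ : x = τ := by tauto
      subst hxτ
      refine ⟨(q.transfer G₁ hqe).reverse, p.transfer G₂ hpe, (hq.transfer _).reverse,
        hp.transfer _, ?_⟩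
      intro e
      rw [hcedges e, Walk.edges_reverse, List.mem_reverse,
        Walk.edges_transfer, Walk.edges_transfer]
      exact or_comm
    · have hxσ : x = σ := by tauto
      subst hxσ
      refine ⟨q.transfer G₁ hqe, (p.transfer G₂ hpe).reverse, hq.transfer _,
        (hp.transfer _).reverse, ?_⟩
      intro e
      rw [hcedges e, Walk.edges_reverse, List.mem_reverse,
        Walk.edges_transfer, Walk.edges_transfer]
      exact or_comm

variable {V : Type*}

lemma Walk.support_sub {G : SimpleGraph V} {u v : V} (p : G.Walk u v)
    (h : ¬ p.Nil) : ∀ x ∈ p.support, x ∈ G.support := by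
  induction p with
  | nil => simp at h
  | @cons a b c hadj q ih =>
    intro x hx
    rw [SimpleGraph.Walk.support_cons] at hx
    rcases List.mem_cons.mp hx with rfl | hx
    · exact ⟨_, hadj⟩
    · by_cases hq : q.Nil
      · rw [SimpleGraph.Walk.nil_iff_support_eq.mp hq] at hx
        simp only [List.mem_singleton] at hx
        subst hx
        exact ⟨_, hadj.symm⟩
      · exact ih hq x hx

lemma paths_to_cycle {G₁ G₂ : SimpleGraph V} {σ τ : V} (hστ : σ ≠ τ)
    (hvert : G₁.support ∩ G₂.support ⊆ {σ, τ})
    (hedge : Disjoint G₁.edgeSet G₂.edgeSet)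
    (p : G₁.Walk σ τ) (q : G₂.Walk σ τ) (hp : p.IsPath) (hq : q.IsPath) :
    ∃ (c : (G₁ ⊔ G₂).Walk σ σ), c.IsCycle ∧
      ∀ e, (e ∈ c.edges ↔ e ∈ p.edges ∨ e ∈ q.edges) := by
  have hpe : ∀ e ∈ p.edges, e ∈ (G₁ ⊔ G₂).edgeSet := by
    intro e he
    rw [edgeSet_sup]
    exact Or.inl (p.edges_subset_edgeSet he)
  have hqe : ∀ e ∈ q.edges, e ∈ (G₁ ⊔ G₂).edgeSet := by
    intro e he
    rw [edgeSet_sup]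
    exact Or.inr (q.edges_subset_edgeSet he)
  set P := p.transfer (G₁ ⊔ G₂) hpe with hPdef
  set Q := q.transfer (G₁ ⊔ G₂) hqe with hQdef
  refine ⟨P.append Q.reverse, ?_, ?_⟩
  · have hpnil : ¬ p.Nil := Walk.not_nil_of_ne hστ
    have hqnil : ¬ q.Nil := Walk.not_nil_of_ne hστ
    have hedgesP : P.edges = p.edges := Walk.edges_transfer p hpe
    have hedgesQ : Q.edges = q.edges := Walk.edges_transfer q hqe
    rw [Walk.isCycle_def]
    refine ⟨?_, ?_, ?_⟩
    · -- trail
      rw [Walk.isTrail_def, Walk.edges_append, Walk.edges_reverse, hedgesP, hedgesQ]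
      refine List.Nodup.append hp.isTrail.edges_nodup (List.nodup_reverse.mpr hq.isTrail.edges_nodup) ?_
      intro e he1 he2
      rw [List.mem_reverse] at he2
      exact Set.disjoint_left.mp hedge (p.edges_subset_edgeSet he1)
        (q.edges_subset_edgeSet he2)
    · -- not nil
      intro h
      have : (P.append Q.reverse).length = 0 := by rw [h]; rfl
      rw [Walk.length_append] at this
      have hP0 : P.length = 0 := by omega
      rw [Walk.length_transfer] at hP0
      exact hpnil (Walk.nil_iff_length_eq.mpr hP0)
    · -- support tail nodup
      rw [Walk.tail_support_append]
      have hsuppP : P.support = p.support := Walk.support_transfer p hpe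
      have hsuppQrev : Q.reverse.support = q.support.reverse := by
        rw [Walk.support_reverse, Walk.support_transfer]
      have hpn : p.support.Nodup := (Walk.isPath_def p).mp hp
      have hqrevpath : Q.reverse.IsPath := ((hq.transfer hqe)).reverse
      have hqrevn : Q.reverse.support.Nodup := (Walk.isPath_def _).mp hqrevpath
      refine List.Nodup.append ?_ ?_ ?_
      · rw [hsuppP]; exact hpn.tail
      · exact hqrevn.tail
      · intro x hx1 hx2
        have hx1' : x ∈ p.support := by
          rw [hsuppP] at hx1
          exact List.mem_of_mem_tail hx1
        have hx2' : x ∈ q.support := by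
          have := List.mem_of_mem_tail hx2
          rw [hsuppQrev, List.mem_reverse] at this
          exact this
        have hx12 : x ∈ ({σ, τ} : Set V) :=
          hvert ⟨Walk.support_sub p hpnil x hx1', Walk.support_sub q hqnil x hx2'⟩
        rcases hx12 with rfl | hxτ
        · -- x = σ : but σ is not in p.support.tail
          rw [hsuppP] at hx1
          rw [Walk.support_eq_cons, List.nodup_cons] at hpn
          exact hpn.1 hx1
        · -- x = τ : but τ is not in Q.reverse.support.tail
          rw [Set.mem_singleton_iff] at hxτ
          subst hxτ
          rw [Walk.support_eq_cons, List.nodup_cons] at hqrevn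
          exact hqrevn.1 hx2
  · intro e
    rw [Walk.edges_append, List.mem_append, Walk.edges_reverse, List.mem_reverse,
      Walk.edges_transfer, Walk.edges_transfer]

end Helpers

/-- Parallel composition of two-terminal graphs: every simple cycle of `G₁ ∥ G₂`
either lies entirely in `G₁`, or entirely in `G₂`, or decomposes uniquely as a
`σ`–`τ` simple path of `G₁` together with a (reversed) `σ`–`τ` simple path of `G₂`
— and exactly one of the three alternatives holds.  Consequently
`f_SC(G₁ ∥ G₂) = f_SC(G₁) + f_SC(G₂) + f_SP(G₁)·f_SP(G₂)`. -/
theorem stmt_19 {V : Type*} [Fintype V] [DecidableEq V]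
    (G₁ G₂ : SimpleGraph V) (σ τ : V) (hστ : σ ≠ τ)
    (hvert : G₁.support ∩ G₂.support ⊆ {σ, τ})
    (hedge : Disjoint G₁.edgeSet G₂.edgeSet)
    (w : Sym2 V → ℚ) :
    (∀ (v : V) (c : (G₁ ⊔ G₂).Walk v v), c.IsCycle →
      (let A := ∀ e ∈ c.edges, e ∈ G₁.edgeSet
       let B := ∀ e ∈ c.edges, e ∈ G₂.edgeSet
       let C := ∃! pq : G₁.Walk σ τ × G₂.Walk σ τ, pq.1.IsPath ∧ pq.2.IsPath ∧
         {e | e ∈ c.edges} = {e | e ∈ pq.1.edges} ∪ {e | e ∈ pq.2.edges}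
       (A ∧ ¬B ∧ ¬C) ∨ (¬A ∧ B ∧ ¬C) ∨ (¬A ∧ ¬B ∧ C))) ∧
    cycleGF (G₁ ⊔ G₂) w = cycleGF G₁ w + cycleGF G₂ w + pathGF G₁ σ τ w * pathGF G₂ σ τ w := by
  classical
  have hH : ∀ e ∈ (G₁ ⊔ G₂).edgeSet, e ∈ G₁.edgeSet ∨ e ∈ G₂.edgeSet := by
    intro e he; rwa [SimpleGraph.edgeSet_sup] at he
  have cycle_edges_ne : ∀ {H : SimpleGraph V} {v : V} {c : H.Walk v v},
      c.IsCycle → c.edges ≠ [] := by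
    intro H v c hc h0
    have : c.length = 0 := by rw [← SimpleGraph.Walk.length_edges, h0]; rfl
    exact ((SimpleGraph.Walk.isCycle_def c).mp hc).2.1
      (SimpleGraph.Walk.nil_iff_eq_nil.mp (SimpleGraph.Walk.length_eq_zero_iff.mp this))
  have key : ∀ (v : V) (c : (G₁ ⊔ G₂).Walk v v), c.IsCycle →
      ((∀ e ∈ c.edges, e ∈ G₁.edgeSet) ∧ ¬(∀ e ∈ c.edges, e ∈ G₂.edgeSet) ∧
        ¬(∃! pq : G₁.Walk σ τ × G₂.Walk σ τ, pq.1.IsPath ∧ pq.2.IsPath ∧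
          {e | e ∈ c.edges} = {e | e ∈ pq.1.edges} ∪ {e | e ∈ pq.2.edges})) ∨
      (¬(∀ e ∈ c.edges, e ∈ G₁.edgeSet) ∧ (∀ e ∈ c.edges, e ∈ G₂.edgeSet) ∧
        ¬(∃! pq : G₁.Walk σ τ × G₂.Walk σ τ, pq.1.IsPath ∧ pq.2.IsPath ∧
          {e | e ∈ c.edges} = {e | e ∈ pq.1.edges} ∪ {e | e ∈ pq.2.edges})) ∨
      (¬(∀ e ∈ c.edges, e ∈ G₁.edgeSet) ∧ ¬(∀ e ∈ c.edges, e ∈ G₂.edgeSet) ∧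
        (∃! pq : G₁.Walk σ τ × G₂.Walk σ τ, pq.1.IsPath ∧ pq.2.IsPath ∧
          {e | e ∈ c.edges} = {e | e ∈ pq.1.edges} ∪ {e | e ∈ pq.2.edges})) := by
    intro v c hc
    by_cases hA : ∀ e ∈ c.edges, e ∈ G₁.edgeSet
    · left
      refine ⟨hA, ?_, ?_⟩
      · intro hB
        obtain ⟨e, he⟩ := List.exists_mem_of_ne_nil _ (cycle_edges_ne hc)
        exact Set.disjoint_left.mp hedge (hA e he) (hB e he)
      · rintro ⟨⟨p, q⟩, ⟨hp, hq, hset⟩, -⟩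
        obtain ⟨y, hy⟩ := Walk.exists_edge_start q (SimpleGraph.Walk.not_nil_of_ne hστ)
        have hmem : s(σ, y) ∈ ({e | e ∈ p.edges} ∪ {e | e ∈ q.edges} : Set (Sym2 V)) :=
          Or.inr hy
        rw [← hset] at hmem
        exact Set.disjoint_left.mp hedge (hA _ hmem) (q.edges_subset_edgeSet hy)
    · by_cases hB : ∀ e ∈ c.edges, e ∈ G₂.edgeSet
      · right; left
        refine ⟨hA, hB, ?_⟩
        rintro ⟨⟨p, q⟩, ⟨hp, hq, hset⟩, -⟩
        obtain ⟨y, hy⟩ := Walk.exists_edge_start p (SimpleGraph.Walk.not_nil_of_ne hστ)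
        have hmem : s(σ, y) ∈ ({e | e ∈ p.edges} ∪ {e | e ∈ q.edges} : Set (Sym2 V)) :=
          Or.inl hy
        rw [← hset] at hmem
        exact Set.disjoint_left.mp hedge (p.edges_subset_edgeSet hy) (hB _ hmem)
      · right; right
        refine ⟨hA, hB, ?_⟩
        push_neg at hA hB
        obtain ⟨e₂', he₂', hne₂⟩ := hA
        obtain ⟨e₁', he₁', hne₁⟩ := hB
        have h1 : ∃ e ∈ c.edges, e ∈ G₁.edgeSet :=
          ⟨e₁', he₁', (hH _ (c.edges_subset_edgeSet he₁')).resolve_right hne₁⟩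
        have h2 : ∃ e ∈ c.edges, e ∈ G₂.edgeSet :=
          ⟨e₂', he₂', (hH _ (c.edges_subset_edgeSet he₂')).resolve_left hne₂⟩
        obtain ⟨p, q, hp, hq, hiff⟩ := mixed_cycle_decomp hvert hedge c hc h1 h2
        refine ⟨(p, q), ⟨hp, hq, ?_⟩, ?_⟩
        · ext e
          simp only [Set.mem_setOf_eq, Set.mem_union]
          exact hiff e
        · rintro ⟨p', q'⟩ ⟨hp', hq', hset'⟩
          have hset'' : ∀ e, e ∈ c.edges ↔ (e ∈ p'.edges ∨ e ∈ q'.edges) := by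
            intro e
            have := Set.ext_iff.mp hset' e
            simpa using this
          have hp'eq : p' = p := by
            refine SimpleGraph.Walk.eq_of_isPath_of_edges_eq p' hp' p hp (fun e => ⟨?_, ?_⟩)
            · intro he
              rcases (hiff e).mp ((hset'' e).mpr (Or.inl he)) with h | h
              · exact h
              · exact absurd (q.edges_subset_edgeSet h)
                  (fun hg => Set.disjoint_left.mp hedge (p'.edges_subset_edgeSet he) hg)
            · intro he
              rcases (hset'' e).mp ((hiff e).mpr (Or.inl he)) with h | h
              · exact h
              · exact absurd (q'.edges_subset_edgeSet h)
                  (fun hg => Set.disjoint_left.mp hedge (p.edges_subset_edgeSet he) hg)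
          have hq'eq : q' = q := by
            refine SimpleGraph.Walk.eq_of_isPath_of_edges_eq q' hq' q hq (fun e => ⟨?_, ?_⟩)
            · intro he
              rcases (hiff e).mp ((hset'' e).mpr (Or.inr he)) with h | h
              · exact absurd (p.edges_subset_edgeSet h)
                  (fun hg => Set.disjoint_left.mp hedge hg (q'.edges_subset_edgeSet he))
              · exact h
            · intro he
              rcases (hset'' e).mp ((hiff e).mpr (Or.inr he)) with h | h
              · exact absurd (p'.edges_subset_edgeSet h)
                  (fun hg => Set.disjoint_left.mp hedge hg (q.edges_subset_edgeSet he))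
              · exact h
          rw [hp'eq, hq'eq]
  constructor
  · intro v c hc
    exact key v c hc
  · simp only [cycleGF, pathGF]
    set S₁ := (univ : Finset (Finset (Sym2 V))).filter
      (fun C => ∃ (v : V) (c : G₁.Walk v v), c.IsCycle ∧ c.edges.toFinset = C) with hS₁def
    set S₂ := (univ : Finset (Finset (Sym2 V))).filter
      (fun C => ∃ (v : V) (c : G₂.Walk v v), c.IsCycle ∧ c.edges.toFinset = C) with hS₂def
    set P₁ := (univ : Finset (Finset (Sym2 V))).filter
      (fun C => ∃ p : G₁.Walk σ τ, p.IsPath ∧ p.edges.toFinset = C) with hP₁def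
    set P₂ := (univ : Finset (Finset (Sym2 V))).filter
      (fun C => ∃ p : G₂.Walk σ τ, p.IsPath ∧ p.edges.toFinset = C) with hP₂def
    set T := (P₁ ×ˢ P₂).image (fun pr => pr.1 ∪ pr.2) with hTdef
    have hS₁sub : ∀ C ∈ S₁, (∀ e ∈ C, e ∈ G₁.edgeSet) ∧ C.Nonempty := by
      intro C hC
      rw [hS₁def, mem_filter] at hC
      obtain ⟨-, v, c, hcyc, rfl⟩ := hC
      refine ⟨fun e he => c.edges_subset_edgeSet (List.mem_toFinset.mp he), ?_⟩
      obtain ⟨e, he⟩ := List.exists_mem_of_ne_nil _ (cycle_edges_ne hcyc)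
      exact ⟨e, List.mem_toFinset.mpr he⟩
    have hS₂sub : ∀ C ∈ S₂, (∀ e ∈ C, e ∈ G₂.edgeSet) ∧ C.Nonempty := by
      intro C hC
      rw [hS₂def, mem_filter] at hC
      obtain ⟨-, v, c, hcyc, rfl⟩ := hC
      refine ⟨fun e he => c.edges_subset_edgeSet (List.mem_toFinset.mp he), ?_⟩
      obtain ⟨e, he⟩ := List.exists_mem_of_ne_nil _ (cycle_edges_ne hcyc)
      exact ⟨e, List.mem_toFinset.mpr he⟩
    have hP₁sub : ∀ C ∈ P₁, (∀ e ∈ C, e ∈ G₁.edgeSet) ∧ C.Nonempty := by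
      intro C hC
      rw [hP₁def, mem_filter] at hC
      obtain ⟨-, p, hp, rfl⟩ := hC
      refine ⟨fun e he => p.edges_subset_edgeSet (List.mem_toFinset.mp he), ?_⟩
      obtain ⟨y, hy⟩ := Walk.exists_edge_start p (SimpleGraph.Walk.not_nil_of_ne hστ)
      exact ⟨_, List.mem_toFinset.mpr hy⟩
    have hP₂sub : ∀ C ∈ P₂, (∀ e ∈ C, e ∈ G₂.edgeSet) ∧ C.Nonempty := by
      intro C hC
      rw [hP₂def, mem_filter] at hC
      obtain ⟨-, p, hp, rfl⟩ := hC
      refine ⟨fun e he => p.edges_subset_edgeSet (List.mem_toFinset.mp he), ?_⟩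
      obtain ⟨y, hy⟩ := Walk.exists_edge_start p (SimpleGraph.Walk.not_nil_of_ne hστ)
      exact ⟨_, List.mem_toFinset.mpr hy⟩
    have hunion : ((univ : Finset (Finset (Sym2 V))).filter
        (fun C => ∃ (v : V) (c : (G₁ ⊔ G₂).Walk v v), c.IsCycle ∧ c.edges.toFinset = C))
        = (S₁ ∪ S₂) ∪ T := by
      ext C
      constructor
      · intro hC
        rw [mem_filter] at hC
        obtain ⟨-, v, c, hcyc, rfl⟩ := hC
        by_cases hA : ∀ e ∈ c.edges, e ∈ G₁.edgeSet
        · refine mem_union_left _ (mem_union_left _ ?_)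
          rw [hS₁def, mem_filter]
          exact ⟨mem_univ _, v, c.transfer G₁ hA, hcyc.transfer hA,
            by rw [SimpleGraph.Walk.edges_transfer]⟩
        · by_cases hB : ∀ e ∈ c.edges, e ∈ G₂.edgeSet
          · refine mem_union_left _ (mem_union_right _ ?_)
            rw [hS₂def, mem_filter]
            exact ⟨mem_univ _, v, c.transfer G₂ hB, hcyc.transfer hB,
              by rw [SimpleGraph.Walk.edges_transfer]⟩
          · push_neg at hA hB
            obtain ⟨e₂', he₂', hne₂⟩ := hA
            obtain ⟨e₁', he₁', hne₁⟩ := hB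
            have h1 : ∃ e ∈ c.edges, e ∈ G₁.edgeSet :=
              ⟨e₁', he₁', (hH _ (c.edges_subset_edgeSet he₁')).resolve_right hne₁⟩
            have h2 : ∃ e ∈ c.edges, e ∈ G₂.edgeSet :=
              ⟨e₂', he₂', (hH _ (c.edges_subset_edgeSet he₂')).resolve_left hne₂⟩
            obtain ⟨p, q, hp, hq, hiff⟩ := mixed_cycle_decomp hvert hedge c hcyc h1 h2
            refine mem_union_right _ ?_
            rw [hTdef, mem_image]
            refine ⟨(p.edges.toFinset, q.edges.toFinset), ?_, ?_⟩
            · rw [mem_product]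
              constructor
              · rw [hP₁def, mem_filter]; exact ⟨mem_univ _, p, hp, rfl⟩
              · rw [hP₂def, mem_filter]; exact ⟨mem_univ _, q, hq, rfl⟩
            · ext e
              simp only [List.mem_toFinset, mem_union]
              exact (hiff e).symm
      · intro hC
        rw [mem_filter]
        refine ⟨mem_univ _, ?_⟩
        rcases mem_union.mp hC with hC | hC
        · rcases mem_union.mp hC with hC | hC
          · rw [hS₁def, mem_filter] at hC
            obtain ⟨-, v, c, hcyc, rfl⟩ := hC
            have h : ∀ e ∈ c.edges, e ∈ (G₁ ⊔ G₂).edgeSet := by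
              intro e he
              rw [SimpleGraph.edgeSet_sup]
              exact Or.inl (c.edges_subset_edgeSet he)
            exact ⟨v, c.transfer _ h, hcyc.transfer h,
              by rw [SimpleGraph.Walk.edges_transfer]⟩
          · rw [hS₂def, mem_filter] at hC
            obtain ⟨-, v, c, hcyc, rfl⟩ := hC
            have h : ∀ e ∈ c.edges, e ∈ (G₁ ⊔ G₂).edgeSet := by
              intro e he
              rw [SimpleGraph.edgeSet_sup]
              exact Or.inr (c.edges_subset_edgeSet he)
            exact ⟨v, c.transfer _ h, hcyc.transfer h,
              by rw [SimpleGraph.Walk.edges_transfer]⟩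
        · rw [hTdef, mem_image] at hC
          obtain ⟨⟨C₁, C₂⟩, hmem, rfl⟩ := hC
          rw [mem_product] at hmem
          obtain ⟨h1, h2⟩ := hmem
          rw [hP₁def, mem_filter] at h1
          obtain ⟨-, p, hp, rfl⟩ := h1
          rw [hP₂def, mem_filter] at h2
          obtain ⟨-, q, hq, rfl⟩ := h2
          obtain ⟨c, hcyc, hiff⟩ := paths_to_cycle hστ hvert hedge p q hp hq
          refine ⟨σ, c, hcyc, ?_⟩
          ext e
          simp only [List.mem_toFinset, mem_union]
          exact hiff e
    have hd12 : Disjoint S₁ S₂ := by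
      rw [disjoint_left]
      intro C h1 h2
      obtain ⟨hsub1, e, he⟩ := hS₁sub C h1
      exact Set.disjoint_left.mp hedge (hsub1 e he) ((hS₂sub C h2).1 e he)
    have hdT : Disjoint (S₁ ∪ S₂) T := by
      rw [disjoint_left]
      intro C hC hT
      rw [hTdef, mem_image] at hT
      obtain ⟨⟨C₁, C₂⟩, hmem, rfl⟩ := hT
      rw [mem_product] at hmem
      obtain ⟨h1, h2⟩ := hmem
      obtain ⟨hsub1, e1, he1⟩ := hP₁sub _ h1
      obtain ⟨hsub2, e2, he2⟩ := hP₂sub _ h2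
      rcases mem_union.mp hC with hC | hC
      · exact Set.disjoint_left.mp hedge
          ((hS₁sub _ hC).1 e2 (mem_union_right _ he2)) (hsub2 e2 he2)
      · exact Set.disjoint_left.mp hedge (hsub1 e1 he1)
          ((hS₂sub _ hC).1 e1 (mem_union_left _ he1))
    rw [hunion, sum_union hdT, sum_union hd12]
    congr 1
    have hinj : ∀ pr ∈ P₁ ×ˢ P₂, ∀ pr' ∈ P₁ ×ˢ P₂,
        (fun pr : Finset (Sym2 V) × Finset (Sym2 V) => pr.1 ∪ pr.2) pr
          = (fun pr : Finset (Sym2 V) × Finset (Sym2 V) => pr.1 ∪ pr.2) pr' → pr = pr' := by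
      intro pr hpr pr' hpr' heq
      rw [mem_product] at hpr hpr'
      simp only at heq
      have h11 := (hP₁sub _ hpr.1).1
      have h12 := (hP₂sub _ hpr.2).1
      have h21 := (hP₁sub _ hpr'.1).1
      have h22 := (hP₂sub _ hpr'.2).1
      have e1 : pr.1 = pr'.1 := by
        ext e
        constructor
        · intro he
          have hu : e ∈ pr'.1 ∪ pr'.2 := by rw [← heq]; exact mem_union_left _ he
          rcases mem_union.mp hu with h | h
          · exact h
          · exact absurd (h22 e h)
              (fun hg => Set.disjoint_left.mp hedge (h11 e he) hg)
        · intro he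
          have hu : e ∈ pr.1 ∪ pr.2 := by rw [heq]; exact mem_union_left _ he
          rcases mem_union.mp hu with h | h
          · exact h
          · exact absurd (h12 e h)
              (fun hg => Set.disjoint_left.mp hedge (h21 e he) hg)
      have e2 : pr.2 = pr'.2 := by
        ext e
        constructor
        · intro he
          have hu : e ∈ pr'.1 ∪ pr'.2 := by rw [← heq]; exact mem_union_right _ he
          rcases mem_union.mp hu with h | h
          · exact absurd (h12 e he)
              (fun hg => Set.disjoint_left.mp hedge (h21 e h) hg)
          · exact h
        · intro he
          have hu : e ∈ pr.1 ∪ pr.2 := by rw [heq]; exact mem_union_right _ he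
          rcases mem_union.mp hu with h | h
          · exact absurd (h22 e he)
              (fun hg => Set.disjoint_left.mp hedge (h11 e h) hg)
          · exact h
      exact Prod.ext e1 e2
    rw [hTdef, sum_image hinj, Finset.sum_mul_sum, ← Finset.sum_product']
    refine Finset.sum_congr rfl ?_
    intro pr hpr
    rw [mem_product] at hpr
    have hdisj : Disjoint pr.1 pr.2 := by
      rw [disjoint_left]
      intro e he1 he2
      exact Set.disjoint_left.mp hedge ((hP₁sub _ hpr.1).1 e he1) ((hP₂sub _ hpr.2).1 e he2)
    rw [prod_union hdisj]
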